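/- For a fixed convex body K in the plane and a fixed convex body K', the function φ(w) = area of the convex hull of K ∪ (K' + w) is a convex function of the translation vector w ∈ ℝ². -/

import Mathlib

open MeasureTheory Set

lemma isIcc_of_compact_convex {s : Set ℝ} (hs : IsCompact s) (hc : Convex ℝ s)
    (hne : s.Nonempty) : s = Set.Icc (sInf s) (sSup s) := by
  apply subset_antisymm
  · intro x hx
    exact ⟨csInf_le hs.bddBelow hx, le_csSup hs.bddAbove hx⟩
  · exact hc.ordConnected.out (hs.isClosed.csInf_mem hne hs.bddBelow)
      (hs.isClosed.csSup_mem hne hs.bddAbove)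

lemma isCompact_hull_union {E : Type*} [NormedAddCommGroup E] [NormedSpace ℝ E]
    {s t : Set E} (hs : IsCompact s) (ht : IsCompact t)
    (hsc : Convex ℝ s) (htc : Convex ℝ t) (hs0 : s.Nonempty) (ht0 : t.Nonempty) :
    IsCompact (convexHull ℝ (s ∪ t)) := by
  rw [hsc.convexHull_union htc hs0 ht0]
  have heq : convexJoin ℝ s t =
      (fun p : ℝ × E × E => (1 - p.1) • p.2.1 + p.1 • p.2.2) '' (Set.Icc (0:ℝ) 1 ×ˢ s ×ˢ t) := by
    ext z
    constructor
    · rintro hz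
      rw [mem_convexJoin] at hz
      obtain ⟨x, hx, y, hy, hseg⟩ := hz
      rw [segment_eq_image] at hseg
      obtain ⟨θ, hθ, rfl⟩ := hseg
      exact ⟨(θ, x, y), ⟨hθ, hx, hy⟩, rfl⟩
    · rintro ⟨⟨θ, x, y⟩, ⟨hθ, hx, hy⟩, rfl⟩
      rw [mem_convexJoin]
      exact ⟨x, hx, y, hy, by rw [segment_eq_image]; exact ⟨θ, hθ, rfl⟩⟩
  rw [heq]
  exact ((isCompact_Icc.prod (hs.prod ht))).image (by fun_prop)

lemma sect_compact {A : Set (ℝ × ℝ)} (hA : IsCompact A) (x : ℝ) :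
    IsCompact (Prod.mk x ⁻¹' A) := by
  rw [Metric.isCompact_iff_isClosed_bounded]
  constructor
  · exact hA.isClosed.preimage (Continuous.prodMk_right x)
  · obtain ⟨R, hR⟩ := hA.isBounded.subset_closedBall 0
    rw [Metric.isBounded_iff_subset_closedBall 0]
    refine ⟨R, fun y hy => ?_⟩
    have := hR hy
    simp only [Metric.mem_closedBall] at this ⊢
    calc dist y 0 ≤ dist (x, y) (0 : ℝ × ℝ) := by
          rw [Prod.dist_eq]; exact le_max_right _ _
      _ ≤ R := by simpa using this

lemma sect_convex {A : Set (ℝ × ℝ)} (hA : Convex ℝ A) (x : ℝ) :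
    Convex ℝ (Prod.mk x ⁻¹' A) := by
  intro y1 hy1 y2 hy2 a b ha hb hab
  have h : a • ((x, y1) : ℝ × ℝ) + b • (x, y2) = (x, a • y1 + b • y2) := by
    simp [Prod.ext_iff, ← add_mul, hab]
  have := hA hy1 hy2 ha hb hab
  rwa [h] at this

lemma translate_im_convex {E : Type*} [NormedAddCommGroup E] [NormedSpace ℝ E]
    {s : Set E} (hs : Convex ℝ s) (w : E) : Convex ℝ ((fun x => x + w) '' s) := by
  have : (fun x => x + w) '' s = (fun x => w + x) '' s := by
    simp [add_comm]
  rw [this]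
  exact hs.translate w

lemma key (K K' : Set (ℝ × ℝ)) (hK : IsCompact K) (hKc : Convex ℝ K)
    (hK' : IsCompact K') (hK'c : Convex ℝ K') (hK0 : K.Nonempty) (hK'0 : K'.Nonempty)
    (c t : ℝ) (ht0 : 0 ≤ t) (ht1 : t ≤ 1) :
    volume (convexHull ℝ (K ∪ (fun x => x + t • ((0:ℝ), c)) '' K')) ≤
      ENNReal.ofReal (1 - t) * volume (convexHull ℝ (K ∪ K')) +
      ENNReal.ofReal t * volume (convexHull ℝ (K ∪ (fun x => x + ((0:ℝ), c)) '' K')) := by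
  set v : ℝ × ℝ := ((0:ℝ), c) with hv
  set D := convexHull ℝ (K ∪ (fun x => x + t • v) '' K') with hD
  set A := convexHull ℝ (K ∪ K') with hA
  set B := convexHull ℝ (K ∪ (fun x => x + v) '' K') with hB
  -- basic facts
  have htr : ∀ w : ℝ × ℝ, IsCompact ((fun x => x + w) '' K') :=
    fun w => hK'.image (by fun_prop)
  have hDcomp : IsCompact D :=
    isCompact_hull_union hK (htr _) hKc (translate_im_convex hK'c _) hK0 (hK'0.image _)
  have hAcomp : IsCompact A := isCompact_hull_union hK hK' hKc hK'c hK0 hK'0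
  have hBcomp : IsCompact B :=
    isCompact_hull_union hK (htr _) hKc (translate_im_convex hK'c _) hK0 (hK'0.image _)
  have hDm : MeasurableSet D := hDcomp.isClosed.measurableSet
  have hAm : MeasurableSet A := hAcomp.isClosed.measurableSet
  have hBm : MeasurableSet B := hBcomp.isClosed.measurableSet
  -- the key claim
  have claim : ∀ x y : ℝ, (x, y) ∈ D → ∃ p q : ℝ,
      p ∈ Prod.mk x ⁻¹' A ∧ q ∈ Prod.mk x ⁻¹' B ∧ y = (1 - t) * p + t * q := by
    intro x y hxy
    rw [hD, hKc.convexHull_union (translate_im_convex hK'c _) hK0 (hK'0.image _),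
      mem_convexJoin] at hxy
    obtain ⟨k, hk, m, hm, hseg⟩ := hxy
    obtain ⟨k', hk', rfl⟩ := hm
    obtain ⟨a, b, ha, hb, hab, hz⟩ := hseg
    have hz1 : a * k.1 + b * k'.1 = x := by
      have := congrArg Prod.fst hz
      simp [hv] at this
      linarith [this]
    have hz2 : a * k.2 + (b * k'.2 + b * (t * c)) = y := by
      have := congrArg Prod.snd hz
      simpa [hv] using this
    have hkA : k ∈ A := subset_convexHull ℝ _ (Set.mem_union_left _ hk)
    have hk'A : k' ∈ A := subset_convexHull ℝ _ (Set.mem_union_right _ hk')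
    have hkB : k ∈ B := subset_convexHull ℝ _ (Set.mem_union_left _ hk)
    have hk'B : k' + v ∈ B :=
      subset_convexHull ℝ _ (Set.mem_union_right _ ⟨k', hk', rfl⟩)
    have hpA : a • k + b • k' ∈ A :=
      (convex_convexHull ℝ _).segment_subset hkA hk'A ⟨a, b, ha, hb, hab, rfl⟩
    have hqB : a • k + b • (k' + v) ∈ B :=
      (convex_convexHull ℝ _).segment_subset hkB hk'B ⟨a, b, ha, hb, hab, rfl⟩
    refine ⟨(a • k + b • k').2, (a • k + b • (k' + v)).2, ?_, ?_, ?_⟩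
    · have h1 : (a • k + b • k').1 = x := by
        simpa using hz1
      have h2 : (x, (a • k + b • k').2) = a • k + b • k' := by
        rw [← h1]
      rw [Set.mem_preimage, h2]; exact hpA
    · have h1 : (a • k + b • (k' + v)).1 = x := by
        simp [hv]; linarith [hz1]
      have h2 : (x, (a • k + b • (k' + v)).2) = a • k + b • (k' + v) := by
        rw [← h1]
      rw [Set.mem_preimage, h2]; exact hqB
    · simp only [Prod.snd_add, Prod.smul_snd, smul_eq_mul, hv]
      linear_combination -hz2
  -- pointwise bound on sections
  have bound : ∀ x : ℝ, volume (Prod.mk x ⁻¹' D) ≤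
      ENNReal.ofReal (1 - t) * volume (Prod.mk x ⁻¹' A) +
      ENNReal.ofReal t * volume (Prod.mk x ⁻¹' B) := by
    intro x
    rcases eq_empty_or_nonempty (Prod.mk x ⁻¹' D) with h | h
    · simp [h]
    obtain ⟨y0, hy0⟩ := h
    obtain ⟨p0, q0, hp0, hq0, -⟩ := claim x y0 hy0
    have hAX := sect_compact hAcomp x
    have hBX := sect_compact hBcomp x
    have hIccA := isIcc_of_compact_convex hAX (sect_convex (convex_convexHull ℝ _) x) ⟨p0, hp0⟩
    have hIccB := isIcc_of_compact_convex hBX (sect_convex (convex_convexHull ℝ _) x) ⟨q0, hq0⟩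
    set ia := sInf (Prod.mk x ⁻¹' A)
    set sa := sSup (Prod.mk x ⁻¹' A)
    set ib := sInf (Prod.mk x ⁻¹' B)
    set sb := sSup (Prod.mk x ⁻¹' B)
    have hiasa : ia ≤ sa := by
      have := hIccA ▸ hp0; exact le_trans this.1 this.2
    have hibsb : ib ≤ sb := by
      have := hIccB ▸ hq0; exact le_trans this.1 this.2
    have hsub : Prod.mk x ⁻¹' D ⊆ Icc ((1-t)*ia + t*ib) ((1-t)*sa + t*sb) := by
      intro y hy
      obtain ⟨p, q, hp, hq, rfl⟩ := claim x y hy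
      have hp' := hIccA ▸ hp
      have hq' := hIccB ▸ hq
      constructor
      · nlinarith [hp'.1, hq'.1]
      · nlinarith [hp'.2, hq'.2]
    calc volume (Prod.mk x ⁻¹' D) ≤ volume (Icc ((1-t)*ia + t*ib) ((1-t)*sa + t*sb)) :=
          measure_mono hsub
      _ = ENNReal.ofReal ((1-t)*(sa-ia) + t*(sb-ib)) := by
          rw [Real.volume_Icc]; ring_nf
      _ = ENNReal.ofReal (1-t) * ENNReal.ofReal (sa-ia) +
          ENNReal.ofReal t * ENNReal.ofReal (sb-ib) := by
          rw [ENNReal.ofReal_add (by nlinarith) (by nlinarith),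
            ENNReal.ofReal_mul (by linarith), ENNReal.ofReal_mul ht0]
      _ = ENNReal.ofReal (1 - t) * volume (Prod.mk x ⁻¹' A) +
          ENNReal.ofReal t * volume (Prod.mk x ⁻¹' B) := by
          rw [hIccA, hIccB]
          simp [Real.volume_Icc]
  -- integrate
  calc volume D = (volume.prod volume) D := by rw [← Measure.volume_eq_prod]
    _ = ∫⁻ x, volume (Prod.mk x ⁻¹' D) ∂volume := Measure.prod_apply hDm
    _ ≤ ∫⁻ x, (ENNReal.ofReal (1-t) * volume (Prod.mk x ⁻¹' A) +
          ENNReal.ofReal t * volume (Prod.mk x ⁻¹' B)) ∂volume := lintegral_mono bound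
    _ = ENNReal.ofReal (1-t) * ∫⁻ x, volume (Prod.mk x ⁻¹' A) ∂volume +
          ENNReal.ofReal t * ∫⁻ x, volume (Prod.mk x ⁻¹' B) ∂volume := by
          rw [lintegral_add_left ((measurable_measure_prodMk_left hAm).const_mul _),
            lintegral_const_mul _ (measurable_measure_prodMk_left hAm),
            lintegral_const_mul _ (measurable_measure_prodMk_left hBm)]
    _ = ENNReal.ofReal (1 - t) * volume A + ENNReal.ofReal t * volume B := by
          rw [← Measure.prod_apply hAm, ← Measure.prod_apply hBm, ← Measure.volume_eq_prod]

lemma hull_translate_volume (K' : Set (EuclideanSpace ℝ (Fin 2))) (hK' : IsCompact K')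
    (hK'c : Convex ℝ K') (w : EuclideanSpace ℝ (Fin 2)) :
    volume (convexHull ℝ ((fun x => x + w) '' K')) = volume K' := by
  have himg : convexHull ℝ ((fun x => x + w) '' K') = (fun x => x + w) '' K' := by
    apply Convex.convexHull_eq
    have : (fun x => x + w) '' K' = (fun x => w + x) '' K' := by simp [add_comm]
    rw [this]; exact hK'c.translate w
  rw [himg]
  have h1 : (fun x => x + w) '' K' = (fun x => x + (-w)) ⁻¹' K' := by
    ext z
    constructor
    · rintro ⟨k, hk, rfl⟩; simpa using hk
    · intro hz; exact ⟨z + -w, hz, neg_add_cancel_right z w⟩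
  rw [h1]
  exact (measurePreserving_add_right volume (-w)).measure_preimage
    hK'.isClosed.measurableSet.nullMeasurableSet

/-- For fixed convex bodies `K` and `K'` in the plane, the area of the convex hull
of `K ∪ (K' + w)` is a convex function of the translation vector `w`. -/
theorem stmt_4 (K K' : Set (EuclideanSpace ℝ (Fin 2)))
    (hK : IsCompact K) (hKc : Convex ℝ K)
    (hK' : IsCompact K') (hK'c : Convex ℝ K') :
    ConvexOn ℝ Set.univ (fun w : EuclideanSpace ℝ (Fin 2) =>
      (volume (convexHull ℝ (K ∪ (fun x => x + w) '' K'))).toReal) := by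
  refine ⟨convex_univ, ?_⟩
  intro w₁ _ w₂ _ a b ha hb hab
  simp only
  by_cases hK'e : K' = ∅
  · simp only [hK'e, Set.image_empty, Set.union_empty]
    have h : a * (volume (convexHull ℝ K)).toReal + b * (volume (convexHull ℝ K)).toReal
        = (volume (convexHull ℝ K)).toReal := by rw [← add_mul, hab, one_mul]
    simp only [smul_eq_mul]
    linarith
  by_cases hKe : K = ∅
  · have hconst : ∀ w : EuclideanSpace ℝ (Fin 2),
        (volume (convexHull ℝ (K ∪ (fun x => x + w) '' K'))).toReal = (volume K').toReal := by
      intro w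
      rw [hKe, Set.empty_union, hull_translate_volume K' hK' hK'c w]
    rw [hconst, hconst, hconst]
    have h : a * (volume K').toReal + b * (volume K').toReal = (volume K').toReal := by
      rw [← add_mul, hab, one_mul]
    simp only [smul_eq_mul]
    linarith
  have hK0 : K.Nonempty := Set.nonempty_iff_ne_empty.2 hKe
  have hK'0 : K'.Nonempty := Set.nonempty_iff_ne_empty.2 hK'e
  set u : EuclideanSpace ℝ (Fin 2) := w₂ - w₁ with hu
  by_cases huz : u = 0
  · have hw : w₂ = w₁ := by
      have := sub_eq_zero.1 huz; exact this
    rw [hw]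
    have hcombo : a • w₁ + b • w₁ = w₁ := by
      rw [← add_smul, hab, one_smul]
    rw [hcombo]
    have h : a * (volume (convexHull ℝ (K ∪ (fun x => x + w₁) '' K'))).toReal
        + b * (volume (convexHull ℝ (K ∪ (fun x => x + w₁) '' K'))).toReal
        = (volume (convexHull ℝ (K ∪ (fun x => x + w₁) '' K'))).toReal := by
      rw [← add_mul, hab, one_mul]
    simp only [smul_eq_mul]
    linarith
  -- main case: set up the rotation and transfer to ℝ × ℝ
  set e2 : EuclideanSpace ℝ (Fin 2) := EuclideanSpace.single (1 : Fin 2) (1:ℝ) with he2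
  have hnorm : ‖u‖ = ‖‖u‖ • e2‖ := by
    rw [norm_smul, he2, EuclideanSpace.norm_single]
    simp
  set φ := Submodule.reflection (ℝ ∙ (u - ‖u‖ • e2))ᗮ with hφ
  have hφu : φ u = ‖u‖ • e2 := Submodule.reflection_sub hnorm
  set Ψfun : EuclideanSpace ℝ (Fin 2) → ℝ × ℝ := fun z => (φ z 0, φ z 1) with hΨ
  have hΨlin : IsLinearMap ℝ Ψfun := by
    constructor
    · intro p q; simp [hΨ, Prod.ext_iff]
    · intro c p; simp [hΨ, Prod.ext_iff]
  have hΨcont : Continuous Ψfun := by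
    apply Continuous.prodMk
    · exact (PiLp.continuous_apply 2 _ (0 : Fin 2)).comp φ.continuous
    · exact (PiLp.continuous_apply 2 _ (1 : Fin 2)).comp φ.continuous
  set Ψequiv : EuclideanSpace ℝ (Fin 2) ≃ᵐ ℝ × ℝ :=
    (φ.toMeasurableEquiv.trans (MeasurableEquiv.toLp 2 (Fin 2 → ℝ)).symm).trans
      (MeasurableEquiv.piFinTwo fun _ => ℝ) with hΨe
  have hcoe : ⇑Ψequiv = Ψfun := rfl
  have hmp : MeasurePreserving Ψequiv :=
    ((volume_preserving_piFinTwo fun _ => ℝ).comp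
      (EuclideanSpace.volume_preserving_symm_measurableEquiv_toLp (Fin 2))).comp φ.measurePreserving
  have hΨu : Ψfun u = ((0:ℝ), ‖u‖) := by
    simp only [hΨ, hφu, he2]
    simp [EuclideanSpace.single_apply, Prod.ext_iff]
  have himg : ∀ S : Set (EuclideanSpace ℝ (Fin 2)), MeasurableSet S →
      volume (Ψfun '' S) = volume S := by
    intro S hS
    rw [← hcoe, MeasurableEquiv.image_eq_preimage_symm]
    exact (hmp.symm Ψequiv).measure_preimage hS.nullMeasurableSet
  -- the transported sets
  set K₂ : Set (ℝ × ℝ) := Ψfun '' K with hK₂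
  set K₂' : Set (ℝ × ℝ) := (fun z => z + Ψfun w₁) '' (Ψfun '' K') with hK₂'
  have hK₂comp : IsCompact K₂ := hK.image hΨcont
  have hK₂conv : Convex ℝ K₂ := hKc.is_linear_image hΨlin
  have hK₂0 : K₂.Nonempty := hK0.image _
  have hK₂'comp : IsCompact K₂' := (hK'.image hΨcont).image (by fun_prop)
  have hK₂'conv : Convex ℝ K₂' := translate_im_convex (hK'c.is_linear_image hΨlin) _
  have hK₂'0 : K₂'.Nonempty := (hK'0.image _).image _
  -- transfer: for every w, the volume equals a volume downstairs
  have htrans : ∀ w : EuclideanSpace ℝ (Fin 2),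
      volume (convexHull ℝ (K ∪ (fun x => x + w) '' K')) =
      volume (convexHull ℝ (K₂ ∪ (fun z => z + (Ψfun w - Ψfun w₁)) '' K₂')) := by
    intro w
    have hcompatK' : ∀ w : EuclideanSpace ℝ (Fin 2), IsCompact ((fun x => x + w) '' K') :=
      fun w => hK'.image (by fun_prop)
    have hS : MeasurableSet (convexHull ℝ (K ∪ (fun x => x + w) '' K')) :=
      (isCompact_hull_union hK (hcompatK' w) hKc (translate_im_convex hK'c _)
        hK0 (hK'0.image _)).isClosed.measurableSet
    have h2 : Ψfun '' ((fun x => x + w) '' K') = (fun z => z + (Ψfun w - Ψfun w₁)) '' K₂' := by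
      rw [hK₂', Set.image_image, Set.image_image, Set.image_image]
      apply Set.image_congr'
      intro k
      show Ψfun (k + w) = Ψfun k + Ψfun w₁ + (Ψfun w - Ψfun w₁)
      rw [hΨlin.map_add]
      abel
    have h1 : Ψfun '' (convexHull ℝ (K ∪ (fun x => x + w) '' K')) =
        convexHull ℝ (K₂ ∪ (fun z => z + (Ψfun w - Ψfun w₁)) '' K₂') := by
      rw [hΨlin.image_convexHull, Set.image_union, h2, hK₂]
    rw [← h1, himg _ hS]
  -- express the three volumes via the key lemma
  have hΨw2 : Ψfun w₂ - Ψfun w₁ = ((0:ℝ), ‖u‖) := by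
    rw [← hΨu]
    have : w₂ = w₁ + u := by rw [hu]; abel
    rw [this, hΨlin.map_add]; abel
  have hΨwc : Ψfun (a • w₁ + b • w₂) - Ψfun w₁ = b • (((0:ℝ), ‖u‖) : ℝ × ℝ) := by
    have hcombo : a • w₁ + b • w₂ = w₁ + b • u := by
      have ha' : a = 1 - b := by linarith
      rw [ha', hu]
      module
    rw [hcombo, hΨlin.map_add, hΨlin.map_smul, hΨu]
    abel
  have hΨw1 : Ψfun w₁ - Ψfun w₁ = (0 : ℝ × ℝ) := by abel
  have hb1 : b ≤ 1 := by linarith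
  have hkey := key K₂ K₂' hK₂comp hK₂conv hK₂'comp hK₂'conv hK₂0 hK₂'0 ‖u‖ b hb hb1
  -- pull everything together
  have hA2 : volume (convexHull ℝ (K ∪ (fun x => x + w₁) '' K')) =
      volume (convexHull ℝ (K₂ ∪ K₂')) := by
    rw [htrans w₁, hΨw1]
    congr 2
    simp
  have hB2 : volume (convexHull ℝ (K ∪ (fun x => x + w₂) '' K')) =
      volume (convexHull ℝ (K₂ ∪ (fun z => z + (((0:ℝ), ‖u‖) : ℝ × ℝ)) '' K₂')) := by
    rw [htrans w₂, hΨw2]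
  have hD2 : volume (convexHull ℝ (K ∪ (fun x => x + (a • w₁ + b • w₂)) '' K')) =
      volume (convexHull ℝ (K₂ ∪ (fun z => z + b • (((0:ℝ), ‖u‖) : ℝ × ℝ)) '' K₂')) := by
    rw [htrans _, hΨwc]
  rw [hA2, hB2, hD2]
  -- now ENNReal arithmetic
  have hAfin : volume (convexHull ℝ (K₂ ∪ K₂')) ≠ ⊤ :=
    (isCompact_hull_union hK₂comp hK₂'comp hK₂conv hK₂'conv hK₂0 hK₂'0).measure_lt_top.ne
  have hBfin : volume (convexHull ℝ (K₂ ∪ (fun z => z + (((0:ℝ), ‖u‖) : ℝ × ℝ)) '' K₂')) ≠ ⊤ :=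
    (isCompact_hull_union hK₂comp (hK₂'comp.image (by fun_prop)) hK₂conv
      (translate_im_convex hK₂'conv _) hK₂0 (hK₂'0.image _)).measure_lt_top.ne
  have hmulA : ENNReal.ofReal (1 - b) * volume (convexHull ℝ (K₂ ∪ K₂')) ≠ ⊤ :=
    ENNReal.mul_ne_top ENNReal.ofReal_ne_top hAfin
  have hmulB : ENNReal.ofReal b *
      volume (convexHull ℝ (K₂ ∪ (fun z => z + (((0:ℝ), ‖u‖) : ℝ × ℝ)) '' K₂')) ≠ ⊤ :=
    ENNReal.mul_ne_top ENNReal.ofReal_ne_top hBfin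
  have := ENNReal.toReal_mono (ENNReal.add_ne_top.2 ⟨hmulA, hmulB⟩) hkey
  rw [ENNReal.toReal_add hmulA hmulB, ENNReal.toReal_mul, ENNReal.toReal_mul,
    ENNReal.toReal_ofReal (by linarith : (0:ℝ) ≤ 1 - b), ENNReal.toReal_ofReal hb] at this
  have ha' : a = 1 - b := by linarith
  rw [ha']
  exact this
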